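/- arXiv:2008.01610 — 4 statements merged into one kernel-verified Lean document; each statement's English description precedes it below -/
import Mathlib

section
/- Let A ⊆ F be a finite subset of a field and let g ∈ F[x₁,…,xₙ] be a nonzero polynomial. Then the sum over all points p ∈ Aⁿ of the order of vanishing of g at p is at most |A|^{n−1} · deg g. -/
open MvPolynomial
variable {F : Type*} [Field F]

noncomputable def expandAt {n : ℕ} (p : Fin n → F) (g : MvPolynomial (Fin n) F) :
    MvPolynomial (Fin n) F :=
  aeval (fun i => X i + C (p i)) g

noncomputable def vanishOrder {n : ℕ} (g : MvPolynomial (Fin n) F) (p : Fin n → F) : ℕ :=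
  sInf {k | ∃ m ∈ (expandAt p g).support, (m.sum fun _ e => e) = k}

noncomputable def expandAtHom {n : ℕ} (p : Fin n → F) :
    MvPolynomial (Fin n) F →ₐ[F] MvPolynomial (Fin n) F :=
  aeval (fun i => X i + C (p i))

lemma expandAtHom_apply {n : ℕ} (p : Fin n → F) (g : MvPolynomial (Fin n) F) :
    expandAtHom p g = expandAt p g := rfl

lemma expandAtHom_comp {n : ℕ} (p q : Fin n → F) :
    (expandAtHom (F := F) (n := n) p).comp (expandAtHom q) = expandAtHom (q + p) := by
  apply algHom_ext
  intro i
  simp [expandAtHom, map_add]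
  ring

lemma expandAt_expandAt {n : ℕ} (p q : Fin n → F) (g : MvPolynomial (Fin n) F) :
    expandAt p (expandAt q g) = expandAt (q + p) g := by
  rw [← expandAtHom_apply, ← expandAtHom_apply, ← expandAtHom_apply, ← AlgHom.comp_apply,
    expandAtHom_comp]

lemma expandAt_zero {n : ℕ} (g : MvPolynomial (Fin n) F) : expandAt 0 g = g := by
  unfold expandAt
  simp only [Pi.zero_apply, map_zero, add_zero]
  rw [show (fun i : Fin n => X (R := F) i) = X from rfl, aeval_X_left_apply]

lemma expandAt_ne_zero {n : ℕ} (p : Fin n → F) {g : MvPolynomial (Fin n) F} (hg : g ≠ 0) :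
    expandAt p g ≠ 0 := by
  intro h
  apply hg
  have := congrArg (expandAt (-p)) h
  rw [expandAt_expandAt, add_neg_cancel, expandAt_zero] at this
  simpa [expandAt] using this

lemma vanishOrder_le {n : ℕ} {g : MvPolynomial (Fin n) F} {p : Fin n → F}
    {m : Fin n →₀ ℕ} (hm : m ∈ (expandAt p g).support) :
    vanishOrder g p ≤ m.sum fun _ e => e :=
  Nat.sInf_le ⟨m, hm, rfl⟩

lemma exists_vanishOrder {n : ℕ} {g : MvPolynomial (Fin n) F} (hg : g ≠ 0) (p : Fin n → F) :
    ∃ m ∈ (expandAt p g).support, (m.sum fun _ e => e) = vanishOrder g p := by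
  have hne : {k | ∃ m ∈ (expandAt p g).support, (m.sum fun _ e => e) = k}.Nonempty := by
    obtain ⟨m, hm⟩ := (support_nonempty.mpr (expandAt_ne_zero p hg))
    exact ⟨_, m, hm, rfl⟩
  exact Nat.sInf_mem hne

open Polynomial in
lemma finSuccEquiv_expandAt_tail {n : ℕ} (a : Fin n → F) (q : MvPolynomial (Fin (n+1)) F) :
    finSuccEquiv F n (expandAt (Fin.cons 0 a) q) =
      Polynomial.map (expandAtHom (F := F) a).toRingHom (finSuccEquiv F n q) := by
  have h : ((Polynomial.mapAlgHom (expandAtHom (F := F) a)).comp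
      (finSuccEquiv F n).toAlgHom : MvPolynomial (Fin (n+1)) F →ₐ[F] _) =
      (finSuccEquiv F n).toAlgHom.comp (expandAtHom (Fin.cons 0 a)) := by
    apply MvPolynomial.algHom_ext
    intro i
    refine Fin.cases ?_ ?_ i
    · simp [expandAtHom, expandAt, finSuccEquiv_X_zero]
    · intro j
      simp only [expandAtHom, expandAt, AlgHom.coe_comp, AlgEquiv.toAlgHom_eq_coe,
        AlgHom.coe_coe, Function.comp_apply, MvPolynomial.aeval_X, map_add, finSuccEquiv_X_succ,
        Polynomial.mapAlgHom, Polynomial.coe_mapRingHom, Polynomial.map_C, Fin.cons_succ,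
        AlgHom.coe_mk, MvPolynomial.aeval_C, AlgHom.toRingHom_eq_coe, RingHom.coe_coe]
      simp [MvPolynomial.finSuccEquiv_apply, MvPolynomial.algebraMap_eq]
  have := congrArg (fun f => f q) h.symm
  simpa [expandAtHom_apply] using this

open Polynomial in
lemma finSuccEquiv_expandAt_head {n : ℕ} (b : F) (q : MvPolynomial (Fin (n+1)) F) :
    finSuccEquiv F n (expandAt (Fin.cons b 0) q) =
      Polynomial.taylor (MvPolynomial.C b) (finSuccEquiv F n q) := by
  have h : ((Polynomial.aeval (Polynomial.X + Polynomial.C (MvPolynomial.C b)) :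
        Polynomial (MvPolynomial (Fin n) F) →ₐ[MvPolynomial (Fin n) F] _).restrictScalars F).comp
        (finSuccEquiv F n).toAlgHom =
      (finSuccEquiv F n).toAlgHom.comp (expandAtHom (Fin.cons b 0)) := by
    apply MvPolynomial.algHom_ext
    intro i
    refine Fin.cases ?_ ?_ i
    · simp only [expandAtHom, expandAt, AlgHom.coe_comp, AlgEquiv.toAlgHom_eq_coe,
        AlgHom.coe_coe, Function.comp_apply, MvPolynomial.aeval_X, finSuccEquiv_X_zero,
        AlgHom.coe_restrictScalars, Polynomial.aeval_X, map_add, Fin.cons_zero]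
      simp [MvPolynomial.finSuccEquiv_apply, MvPolynomial.algebraMap_eq]
    · intro j
      simp only [expandAtHom, expandAt, AlgHom.coe_comp, AlgEquiv.toAlgHom_eq_coe,
        AlgHom.coe_coe, Function.comp_apply, MvPolynomial.aeval_X, finSuccEquiv_X_succ,
        AlgHom.coe_restrictScalars, Polynomial.aeval_C, Fin.cons_succ, Pi.zero_apply,
        map_zero, add_zero]
      simp [finSuccEquiv_X_succ, Polynomial.algebraMap_apply, MvPolynomial.algebraMap_eq]
  have := congrArg (fun f => f q) h
  simp only [AlgHom.coe_comp, AlgEquiv.toAlgHom_eq_coe, AlgHom.coe_coe, Function.comp_apply,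
    AlgHom.coe_restrictScalars, expandAtHom_apply] at this
  rw [taylor_apply, comp_eq_aeval]
  exact this.symm

/-- Extract the univariate polynomial of coefficients of a fixed multi-exponent `e`. -/
noncomputable def coeffSlice {n : ℕ} (e : Fin n →₀ ℕ) (G : Polynomial (MvPolynomial (Fin n) F)) :
    Polynomial F :=
  ∑ j ∈ Finset.range (G.natDegree + 1), Polynomial.C (coeff e (G.coeff j)) * Polynomial.X ^ j

lemma coeffSlice_coeff {n : ℕ} (e : Fin n →₀ ℕ) (G : Polynomial (MvPolynomial (Fin n) F)) (j : ℕ) :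
    (coeffSlice e G).coeff j = coeff e (G.coeff j) := by
  rw [coeffSlice, Polynomial.finset_sum_coeff]
  simp only [Polynomial.coeff_C_mul, Polynomial.coeff_X_pow, mul_ite, mul_one, mul_zero]
  rw [Finset.sum_ite_eq (Finset.range (G.natDegree + 1)) j]
  split_ifs with h
  · rfl
  · rw [Finset.mem_range, not_lt] at h
    rw [Polynomial.coeff_eq_zero_of_natDegree_lt (by omega), coeff_zero]

lemma natDegree_coeffSlice_le {n : ℕ} (e : Fin n →₀ ℕ)
    (G : Polynomial (MvPolynomial (Fin n) F)) :
    (coeffSlice e G).natDegree ≤ G.natDegree := by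
  rw [Polynomial.natDegree_le_iff_coeff_eq_zero]
  intro j hj
  rw [coeffSlice_coeff, Polynomial.coeff_eq_zero_of_natDegree_lt hj, coeff_zero]

open Polynomial in
lemma coeff_taylor_coeffSlice {n : ℕ} (e : Fin n →₀ ℕ)
    (G : Polynomial (MvPolynomial (Fin n) F)) (b : F) (k : ℕ) :
    coeff e ((Polynomial.taylor (MvPolynomial.C b) G).coeff k) =
      (Polynomial.taylor b (coeffSlice e G)).coeff k := by
  rw [taylor_coeff, taylor_coeff]
  rw [eval_eq_sum_range' (n := G.natDegree + 1)
    (lt_of_le_of_lt ((natDegree_hasseDeriv_le G k).trans (Nat.sub_le _ _)) (Nat.lt_succ_self _)),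
    eval_eq_sum_range' (n := G.natDegree + 1)
    (lt_of_le_of_lt (((natDegree_hasseDeriv_le _ k).trans (Nat.sub_le _ _)).trans
      (natDegree_coeffSlice_le e G)) (Nat.lt_succ_self _))]
  rw [MvPolynomial.coeff_sum]
  apply Finset.sum_congr rfl
  intro j _
  rw [hasseDeriv_coeff, hasseDeriv_coeff, coeffSlice_coeff]
  rw [show ((MvPolynomial.C b : MvPolynomial (Fin n) F)) ^ j = MvPolynomial.C (b ^ j) by
    rw [map_pow]]
  rw [mul_comm (((j + k).choose k : MvPolynomial (Fin n) F) * G.coeff (j + k))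
    (MvPolynomial.C (b ^ j)), MvPolynomial.coeff_C_mul,
    ← map_natCast (MvPolynomial.C (R := F) (σ := Fin n)) ((j + k).choose k),
    MvPolynomial.coeff_C_mul]
  ring

open Polynomial in
lemma taylor_self_coeff_rootMultiplicity {b : F} {H : Polynomial F} (hH : H ≠ 0) :
    (Polynomial.taylor b H).coeff (rootMultiplicity b H) =
      Polynomial.eval b (H /ₘ (Polynomial.X - Polynomial.C b) ^ rootMultiplicity b H) := by
  set k := rootMultiplicity b H
  set Q := H /ₘ (Polynomial.X - Polynomial.C b) ^ k with hQ
  conv_lhs => rw [← Polynomial.pow_mul_divByMonic_rootMultiplicity_eq H b]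
  rw [taylor_apply, Polynomial.mul_comp, Polynomial.pow_comp, Polynomial.sub_comp,
    Polynomial.X_comp, Polynomial.C_comp, add_sub_cancel_right]
  rw [show (k : ℕ) = 0 + k from (zero_add k).symm, Polynomial.coeff_X_pow_mul]
  rw [Polynomial.coeff_zero_eq_eval_zero, ← taylor_apply, Polynomial.taylor_eval, zero_add]

open Polynomial in
lemma key_point {n : ℕ} (q : MvPolynomial (Fin (n+1)) F) (e : Fin n →₀ ℕ)
    (he : ∃ j, coeff (Finsupp.cons j e) q ≠ 0) (b : F) :
    vanishOrder q (Fin.cons b 0) ≤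
      (e.sum fun _ x => x) + rootMultiplicity b (coeffSlice e (finSuccEquiv F n q)) := by
  set H := coeffSlice e (finSuccEquiv F n q) with hHdef
  have hH : H ≠ 0 := by
    obtain ⟨j, hj⟩ := he
    intro h
    apply hj
    rw [← finSuccEquiv_coeff_coeff, ← coeffSlice_coeff, ← hHdef, h, Polynomial.coeff_zero]
  set k := rootMultiplicity b H with hk
  have hcoeff : coeff (Finsupp.cons k e) (expandAt (Fin.cons b 0) q) ≠ 0 := by
    rw [← finSuccEquiv_coeff_coeff, finSuccEquiv_expandAt_head, coeff_taylor_coeffSlice,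
      ← hHdef, hk, taylor_self_coeff_rootMultiplicity hH]
    exact Polynomial.eval_divByMonic_pow_rootMultiplicity_ne_zero b hH
  have := vanishOrder_le (mem_support_iff.mpr hcoeff)
  rw [Finsupp.sum_cons] at this
  omega

open Polynomial in
lemma sum_rootMultiplicity_le {H : Polynomial F} (hH : H ≠ 0) (A : Finset F) :
    ∑ b ∈ A, rootMultiplicity b H ≤ H.natDegree := by
  classical
  have h1 : ∑ b ∈ A, rootMultiplicity b H = ∑ b ∈ A ∩ H.roots.toFinset, rootMultiplicity b H := by
    refine (Finset.sum_subset Finset.inter_subset_left ?_).symm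
    intro b hb hb'
    rw [← Polynomial.count_roots, Multiset.count_eq_zero]
    intro hmem
    exact hb' (Finset.mem_inter.mpr ⟨hb, Multiset.mem_toFinset.mpr hmem⟩)
  rw [h1]
  calc ∑ b ∈ A ∩ H.roots.toFinset, rootMultiplicity b H
      ≤ ∑ b ∈ H.roots.toFinset, rootMultiplicity b H := by
        exact Finset.sum_le_sum_of_subset Finset.inter_subset_right
    _ = Multiset.card H.roots := by
        simp_rw [← Polynomial.count_roots]
        exact Multiset.toFinset_sum_count_eq _
    _ ≤ H.natDegree := Polynomial.card_roots' H

open Polynomial in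
lemma key_line {n : ℕ} (q : MvPolynomial (Fin (n+1)) F) (hq : q ≠ 0) (A : Finset F) :
    ∃ μ : ℕ, (∀ m ∈ q.support, μ ≤ ((Finsupp.tail m).sum fun _ x => x)) ∧
      ∑ b ∈ A, vanishOrder q (Fin.cons b 0) ≤ A.card * μ + degreeOf 0 q := by
  obtain ⟨m₀, hm₀, hmin⟩ := Finset.exists_min_image q.support
    (fun m => (Finsupp.tail m).sum fun _ x => x) (support_nonempty.mpr hq)
  set e := Finsupp.tail m₀ with he
  set μ := (Finsupp.tail m₀).sum fun _ x => x with hμ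
  refine ⟨μ, hmin, ?_⟩
  set H := coeffSlice e (finSuccEquiv F n q) with hHdef
  have hecons : ∃ j, coeff (Finsupp.cons j e) q ≠ 0 := by
    refine ⟨m₀ 0, ?_⟩
    rw [he, Finsupp.cons_tail]
    exact mem_support_iff.mp hm₀
  have hH : H ≠ 0 := by
    obtain ⟨j, hj⟩ := hecons
    intro h
    apply hj
    rw [← finSuccEquiv_coeff_coeff, ← coeffSlice_coeff, ← hHdef, h, Polynomial.coeff_zero]
  calc ∑ b ∈ A, vanishOrder q (Fin.cons b 0)
      ≤ ∑ b ∈ A, (μ + rootMultiplicity b H) := by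
        refine Finset.sum_le_sum fun b _ => ?_
        exact key_point q e hecons b
    _ = A.card * μ + ∑ b ∈ A, rootMultiplicity b H := by
        rw [Finset.sum_add_distrib, Finset.sum_const, smul_eq_mul]
    _ ≤ A.card * μ + degreeOf 0 q := by
        gcongr
        refine (sum_rootMultiplicity_le hH A).trans ?_
        refine (natDegree_coeffSlice_le e _).trans ?_
        rw [natDegree_finSuccEquiv]

lemma cons_add_cons {n : ℕ} (b : F) (a : Fin n → F) :
    (Fin.cons (0 : F) a : Fin (n+1) → F) + (Fin.cons b (0 : Fin n → F) : Fin (n+1) → F)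
      = Fin.cons b a := by
  funext i
  refine Fin.cases ?_ ?_ i <;> simp

open Polynomial in
lemma key_affine {n : ℕ} (g : MvPolynomial (Fin (n+1)) F) (hg : g ≠ 0) (a : Fin n → F)
    (A : Finset F) :
    ∑ b ∈ A, vanishOrder g (Fin.cons b a) ≤
      A.card * vanishOrder ((finSuccEquiv F n g).coeff (degreeOf 0 g)) a + degreeOf 0 g := by
  set d := degreeOf 0 g with hd
  set gd := (finSuccEquiv F n g).coeff d with hgd_def
  have hGne : finSuccEquiv F n g ≠ 0 := by
    simpa using hg
  have hgd : gd ≠ 0 := by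
    rw [hgd_def, hd, ← natDegree_finSuccEquiv]
    exact Polynomial.leadingCoeff_ne_zero.mpr hGne
  set g' := expandAt (Fin.cons 0 a) g with hg'_def
  have hg' : g' ≠ 0 := expandAt_ne_zero _ hg
  have hmap : finSuccEquiv F n g' = Polynomial.map (expandAtHom (F := F) a).toRingHom
      (finSuccEquiv F n g) := finSuccEquiv_expandAt_tail a g
  have hlead : (expandAtHom (F := F) a).toRingHom (finSuccEquiv F n g).leadingCoeff ≠ 0 := by
    simp only [AlgHom.toRingHom_eq_coe, RingHom.coe_coe, expandAtHom_apply]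
    exact expandAt_ne_zero _ (Polynomial.leadingCoeff_ne_zero.mpr hGne)
  have hdeg' : degreeOf 0 g' = d := by
    rw [← natDegree_finSuccEquiv, hmap,
      Polynomial.natDegree_map_of_leadingCoeff_ne_zero _ hlead, natDegree_finSuccEquiv]
  -- the d-th coefficient of finSuccEquiv g' is expandAt a gd
  have hcoeffd : (finSuccEquiv F n g').coeff d = expandAt a gd := by
    rw [hmap, Polynomial.coeff_map]
    rfl
  obtain ⟨μ, hmin, hsum⟩ := key_line g' hg' A
  rw [hdeg'] at hsum
  -- vanishOrder matches
  have hvo : ∀ b, vanishOrder g (Fin.cons b a) = vanishOrder g' (Fin.cons b 0) := by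
    intro b
    unfold vanishOrder
    rw [hg'_def, expandAt_expandAt, cons_add_cons]
  -- μ ≤ vanishOrder gd a
  have hμ : μ ≤ vanishOrder gd a := by
    obtain ⟨m, hm, hmsum⟩ := exists_vanishOrder hgd a
    have : Finsupp.cons d m ∈ g'.support := by
      rw [MvPolynomial.mem_support_iff, ← finSuccEquiv_coeff_coeff, hcoeffd]
      exact MvPolynomial.mem_support_iff.mp hm
    have h2 := hmin _ this
    rwa [Finsupp.tail_cons, hmsum] at h2
  calc ∑ b ∈ A, vanishOrder g (Fin.cons b a)
      = ∑ b ∈ A, vanishOrder g' (Fin.cons b 0) := by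
        exact Finset.sum_congr rfl fun b _ => hvo b
    _ ≤ A.card * μ + d := hsum
    _ ≤ A.card * vanishOrder gd a + d := by gcongr

lemma totalDegree_finZero (p : MvPolynomial (Fin 0) F) : p.totalDegree = 0 := by
  apply Nat.eq_zero_of_le_zero
  apply Finset.sup_le
  intro m _
  rw [Subsingleton.elim m 0, Finsupp.sum_zero_index]

/-- Schwartz–Zippel with multiplicities: for a finite `A ⊆ F` and nonzero
`g ∈ F[x₁,…,xₙ]`, the sum over `p ∈ Aⁿ` of the vanishing order of `g` at `p` is at most
`|A|^{n-1} · deg g`. -/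
theorem schwartz_zippel_with_multiplicities {n : ℕ} (A : Finset F)
    (g : MvPolynomial (Fin n) F) (hg : g ≠ 0) :
    ∑ p ∈ Fintype.piFinset (fun _ : Fin n => A), vanishOrder g p ≤
      A.card ^ (n - 1) * g.totalDegree := by
  induction n with
  | zero =>
    have h0 : ∀ p : Fin 0 → F, vanishOrder g p = 0 := by
      intro p
      obtain ⟨m, _, hsum⟩ := exists_vanishOrder hg p
      rw [← hsum, Subsingleton.elim m 0, Finsupp.sum_zero_index]
    simp [h0]
  | succ n ih =>
    set d := degreeOf 0 g with hd
    set gd := (finSuccEquiv F n g).coeff d with hgd_def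
    have hGne : finSuccEquiv F n g ≠ 0 := by simpa using hg
    have hgd : gd ≠ 0 := by
      rw [hgd_def, hd, ← natDegree_finSuccEquiv]
      exact Polynomial.leadingCoeff_ne_zero.mpr hGne
    have hdegs : gd.totalDegree + d ≤ g.totalDegree :=
      totalDegree_coeff_finSuccEquiv_add_le g d hgd
    have hsplit : ∑ p ∈ Fintype.piFinset (fun _ : Fin (n+1) => A), vanishOrder g p
        = ∑ a ∈ Fintype.piFinset (fun _ : Fin n => A), ∑ b ∈ A,
            vanishOrder g (Fin.cons b a) := by
      have h1 : ∑ p ∈ Fintype.piFinset (fun _ : Fin (n+1) => A), vanishOrder g p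
          = ∑ x ∈ (Fintype.piFinset (fun _ : Fin n => A)) ×ˢ A,
              vanishOrder g (Fin.cons x.2 x.1) := by
        refine Finset.sum_nbij' (fun p => (Fin.tail p, p 0)) (fun x => Fin.cons x.2 x.1)
          ?_ ?_ ?_ ?_ ?_
        · intro p hp
          rw [Finset.mem_product]
          refine ⟨?_, Fintype.mem_piFinset.mp hp 0⟩
          exact Fintype.mem_piFinset.mpr fun i => Fintype.mem_piFinset.mp hp i.succ
        · intro x hx
          rw [Finset.mem_product] at hx
          refine Fintype.mem_piFinset.mpr fun i => ?_
          refine Fin.cases ?_ ?_ i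
          · simpa using hx.2
          · intro j
            simpa using Fintype.mem_piFinset.mp hx.1 j
        · intro p _
          exact Fin.cons_self_tail p
        · intro x _
          simp [Fin.tail_cons]
        · intro p _
          simp only
          rw [Fin.cons_self_tail]
      rw [h1, Finset.sum_product]
    rw [hsplit]
    have hcard : (Fintype.piFinset (fun _ : Fin n => A)).card = A.card ^ n := by
      rw [Fintype.card_piFinset]
      simp
    calc ∑ a ∈ Fintype.piFinset (fun _ : Fin n => A), ∑ b ∈ A, vanishOrder g (Fin.cons b a)
        ≤ ∑ a ∈ Fintype.piFinset (fun _ : Fin n => A),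
            (A.card * vanishOrder gd a + d) :=
          Finset.sum_le_sum fun a _ => key_affine g hg a A
      _ = A.card * (∑ a ∈ Fintype.piFinset (fun _ : Fin n => A), vanishOrder gd a)
            + A.card ^ n * d := by
          rw [Finset.sum_add_distrib, Finset.sum_const, Finset.mul_sum, hcard, smul_eq_mul]
      _ ≤ A.card * (A.card ^ (n - 1) * gd.totalDegree) + A.card ^ n * d := by
          gcongr
          exact ih gd hgd
      _ ≤ A.card ^ n * gd.totalDegree + A.card ^ n * d := by
          gcongr ?_ + _
          rcases Nat.eq_zero_or_pos n with rfl | hn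
          · rw [totalDegree_finZero]
            simp
          · rw [← mul_assoc, ← pow_succ']
            have : n - 1 + 1 = n := by omega
            rw [this]
      _ = A.card ^ n * (gd.totalDegree + d) := by ring
      _ ≤ A.card ^ n * g.totalDegree := by gcongr
      _ = A.card ^ (n + 1 - 1) * g.totalDegree := by
          rw [Nat.add_sub_cancel]
end

section
/- Let P be a finite set of points in F² and for v ∈ ℤ_{≥0}^P let T(v,n) ⊆ F[x,y]_{≤n} be the subspace of polynomials vanishing to order at least v_p at each p ∈ P. Define b_p(v,n) = dim T(v,n) − dim T(v+e_p,n). If v⁽¹⁾ ≥ v⁽²⁾ coordinatewise with equality at the coordinate p, then b_p(v⁽¹⁾,n) ≤ b_p(v⁽²⁾,n). -/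
open MvPolynomial

variable {F : Type*} [Field F]

/-- The subspace of polynomials in `F[x,y]` vanishing to order at least `m` at `p`:
all monomials of total degree `< m` in the Taylor expansion around `p` have zero
coefficient. -/
noncomputable def vanishingSubmodule (p : Fin 2 → F) (m : ℕ) :
    Submodule F (MvPolynomial (Fin 2) F) :=
  ⨅ (ω : Fin 2 →₀ ℕ) (_ : (ω.sum fun _ e => e) < m),
    LinearMap.ker ((lcoeff F ω).comp
      (aeval (fun i => X i + C (p i)) :
        MvPolynomial (Fin 2) F →ₐ[F] MvPolynomial (Fin 2) F).toLinearMap)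

/-- `T(v, n)`: the subspace of polynomials of degree at most `n` vanishing to order at
least `v p` at each point `p ∈ P`. -/
noncomputable def T (P : Finset (Fin 2 → F)) (v : (Fin 2 → F) → ℕ) (n : ℕ) :
    Submodule F (MvPolynomial (Fin 2) F) :=
  restrictTotalDegree (Fin 2) F n ⊓ ⨅ p ∈ P, vanishingSubmodule p (v p)

/-- `b_p(v, n) = dim T(v,n) − dim T(v + e_p, n)`. -/
noncomputable def b [DecidableEq (Fin 2 → F)] (P : Finset (Fin 2 → F)) (p : Fin 2 → F)
    (v : (Fin 2 → F) → ℕ) (n : ℕ) : ℕ :=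
  Module.finrank F (T P v n) - Module.finrank F (T P (Function.update v p (v p + 1)) n)


section Aux

variable {R V : Type*} [Field R] [AddCommGroup V] [Module R V]

lemma finrank_map_mkQ (K A : Submodule R V) [Module.Finite R A] :
    Module.finrank R (A.map K.mkQ) =
      Module.finrank R A - Module.finrank R (A ⊓ K : Submodule R V) := by
  have hrange : LinearMap.range (K.mkQ ∘ₗ A.subtype) = A.map K.mkQ := by
    rw [LinearMap.range_comp, Submodule.range_subtype]
  have hker : LinearMap.ker (K.mkQ ∘ₗ A.subtype) = Submodule.comap A.subtype (A ⊓ K) := by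
    rw [LinearMap.ker_comp, Submodule.ker_mkQ, Submodule.comap_inf,
      Submodule.comap_subtype_self, top_inf_eq]
  have e : (LinearMap.ker (K.mkQ ∘ₗ A.subtype)) ≃ₗ[R] (A ⊓ K : Submodule R V) := by
    rw [hker]; exact Submodule.comapSubtypeEquivOfLe inf_le_left
  have h := LinearMap.finrank_range_add_finrank_ker (K.mkQ ∘ₗ A.subtype)
  rw [hrange, e.finrank_eq] at h
  omega

end Aux

lemma vanishing_antitone (p : Fin 2 → F) {m m' : ℕ} (h : m ≤ m') :
    vanishingSubmodule p m' ≤ vanishingSubmodule p m := by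
  refine le_iInf fun ω => le_iInf fun hω => ?_
  exact iInf_le_of_le ω (iInf_le_of_le (lt_of_lt_of_le hω h) le_rfl)

lemma T_antitone (P : Finset (Fin 2 → F)) (n : ℕ) {v₁ v₂ : (Fin 2 → F) → ℕ}
    (hle : ∀ q ∈ P, v₂ q ≤ v₁ q) : T P v₁ n ≤ T P v₂ n := by
  refine inf_le_inf_left _ ?_
  refine le_iInf fun q => le_iInf fun hq => ?_
  exact iInf_le_of_le q (iInf_le_of_le hq (vanishing_antitone q (hle q hq)))

lemma T_update [DecidableEq (Fin 2 → F)] (P : Finset (Fin 2 → F)) (p : Fin 2 → F)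
    (hp : p ∈ P) (v : (Fin 2 → F) → ℕ) (n : ℕ) :
    T P (Function.update v p (v p + 1)) n = T P v n ⊓ vanishingSubmodule p (v p + 1) := by
  apply le_antisymm
  · refine le_inf (T_antitone P n fun q hq => ?_) ?_
    · rcases eq_or_ne q p with rfl | hqp
      · simp
      · simp [Function.update_of_ne hqp]
    · refine le_trans inf_le_right ?_
      exact iInf_le_of_le p (iInf_le_of_le hp (by simp))
  · refine le_inf (le_trans inf_le_left inf_le_left) ?_
    refine le_iInf fun q => le_iInf fun hq => ?_
    rcases eq_or_ne q p with rfl | hqp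
    · rw [Function.update_self]; exact inf_le_right
    · rw [Function.update_of_ne hqp]
      exact le_trans inf_le_left (le_trans inf_le_right
        (iInf_le_of_le q (iInf_le_of_le hq le_rfl)))

instance T_finite (P : Finset (Fin 2 → F)) (v : (Fin 2 → F) → ℕ) (n : ℕ) :
    Module.Finite F (T P v n) :=
  Submodule.finiteDimensional_of_le (inf_le_left : T P v n ≤ restrictTotalDegree (Fin 2) F n)

/-- Monotonicity: if `v⁽¹⁾ ≥ v⁽²⁾` coordinatewise with equality at `p`, then
`b_p(v⁽¹⁾, n) ≤ b_p(v⁽²⁾, n)`. -/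
theorem b_monotone [DecidableEq (Fin 2 → F)] (P : Finset (Fin 2 → F)) (p : Fin 2 → F) (hp : p ∈ P) (n : ℕ)
    (v₁ v₂ : (Fin 2 → F) → ℕ) (hle : ∀ q ∈ P, v₂ q ≤ v₁ q) (heq : v₁ p = v₂ p) :
    b P p v₁ n ≤ b P p v₂ n := by
  classical
  set K := vanishingSubmodule p (v₂ p + 1) with hK
  have hb : ∀ w : (Fin 2 → F) → ℕ, w p = v₂ p →
      b P p w n = Module.finrank F ((T P w n).map K.mkQ) := by
    intro w hw
    rw [b, T_update P p hp, finrank_map_mkQ, hw]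
  rw [hb v₁ heq, hb v₂ rfl]
  exact Submodule.finrank_mono (Submodule.map_mono (T_antitone P n hle))
end

section
/- Let V be an irreducible affine variety in F^d and let R_{V,≤n} be the image of the degree-≤n polynomials in the coordinate ring R_V. Then for each point p ∈ V there exists C (depending on n, V, p) such that m_p^C ∩ R_{V,≤n} = 0, where m_p is the maximal ideal of functions vanishing at p; i.e., a nonzero regular function on V representable by a polynomial of degree at most n cannot vanish at p to arbitrarily high order. -/
set_option synthInstance.maxHeartbeats 1000000
set_option maxHeartbeats 1000000

open MvPolynomial

variable {F : Type*} [Field F]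

/-- The maximal ideal `m_p` of regular functions on `V` vanishing at `p`, inside the
coordinate ring `R_V = F[x₁,…,x_d]/I(V)`. -/
noncomputable def maximalIdealAt {d : ℕ} (V : Set (Fin d → F)) (p : Fin d → F) :
    Ideal (MvPolynomial (Fin d) F ⧸ MvPolynomial.vanishingIdeal F V) :=
  Ideal.map (Ideal.Quotient.mk (MvPolynomial.vanishingIdeal F V)) (RingHom.ker (eval p))

/-- A nonzero regular function on an irreducible variety `V` that is representable by a
polynomial of degree at most `n` cannot vanish to arbitrarily high order at a point
`p ∈ V`: there is `C` (depending on `n`, `V`, `p`) with `m_p^C ∩ R_{V,≤n} = 0`. -/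
theorem exists_pow_maximalIdealAt_inter_lowDegree_eq_zero {d : ℕ}
    (V : Set (Fin d → F)) (p : Fin d → F) (hp : p ∈ V)
    (hprime : (MvPolynomial.vanishingIdeal F V).IsPrime) (n : ℕ) :
    ∃ C : ℕ, ∀ g : MvPolynomial (Fin d) F, g.totalDegree ≤ n →
      Ideal.Quotient.mk (MvPolynomial.vanishingIdeal F V) g ∈ maximalIdealAt V p ^ C →
      Ideal.Quotient.mk (MvPolynomial.vanishingIdeal F V) g = 0 := by
  haveI := hprime
  set I := MvPolynomial.vanishingIdeal F V with hI
  -- the evaluation at `p` descends to the quotient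
  have hVp : ∀ a ∈ I, eval p a = 0 := by
    intro a ha
    exact (MvPolynomial.mem_vanishingIdeal_iff).mp ha p hp
  let φ : (MvPolynomial (Fin d) F ⧸ I) →+* F := Ideal.Quotient.lift I (eval p) hVp
  have hmle : maximalIdealAt V p ≤ RingHom.ker φ := by
    rw [maximalIdealAt, Ideal.map_le_iff_le_comap]
    intro a ha
    exact ha
  have hne : maximalIdealAt V p ≠ ⊤ := by
    intro h
    have h1 : (1 : MvPolynomial (Fin d) F ⧸ I) ∈ maximalIdealAt V p := h ▸ Submodule.mem_top
    have := hmle h1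
    rw [RingHom.mem_ker] at this
    simp [φ] at this
  have hbot : (⨅ i : ℕ, maximalIdealAt V p ^ i) = ⊥ :=
    Ideal.iInf_pow_eq_bot_of_isDomain _ hne
  -- the image of the degree-≤-n polynomials, a finite-dimensional subspace
  let f := (Ideal.Quotient.mkₐ F I).toLinearMap
  let W : Submodule F (MvPolynomial (Fin d) F ⧸ I) :=
    Submodule.map f (restrictTotalDegree (Fin d) F n)
  haveI : Module.Finite F W := Module.Finite.map _ _
  haveI : IsArtinian F W := inferInstance
  -- the decreasing chain `m_p^i ∩ W`, viewed inside `W`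
  let N : ℕ →o (Submodule F W)ᵒᵈ :=
    ⟨fun i => Submodule.comap W.subtype
        (Submodule.restrictScalars F (maximalIdealAt V p ^ i)), by
      intro i j hij
      exact Submodule.comap_mono fun x hx =>
        Ideal.pow_le_pow_right hij hx⟩
  obtain ⟨C, hC⟩ := IsArtinian.monotone_stabilizes N
  refine ⟨C, fun g hg hmem => ?_⟩
  have hgW : Ideal.Quotient.mk I g ∈ W :=
    ⟨g, (mem_restrictTotalDegree _ _ _).mpr hg, rfl⟩
  -- the element `⟨mk g, hgW⟩` lies in every `N i`
  have key : ∀ i : ℕ, Ideal.Quotient.mk I g ∈ maximalIdealAt V p ^ i := by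
    intro i
    rcases le_or_gt i C with h | h
    · exact Ideal.pow_le_pow_right h hmem
    · have := hC i h.le
      have heq : OrderDual.ofDual (N C) = OrderDual.ofDual (N i) := congrArg _ this
      have hx : (⟨Ideal.Quotient.mk I g, hgW⟩ : W) ∈ OrderDual.ofDual (N C) := hmem
      rw [heq] at hx
      exact hx
  have : Ideal.Quotient.mk I g ∈ (⨅ i : ℕ, maximalIdealAt V p ^ i) :=
    Ideal.mem_iInf.mpr key
  rw [hbot] at this
  simpa using this
end

section
/- Let h ∈ F[[x]] be a formal power series with no constant or linear term, and consider the plane curve V in F² 'parametrized' by y = h(x). For each r ≥ 0 and each polynomial g ∈ F[x,y], the coefficient of x^r in the power series g(x, h(x)) is a fixed F-linear combination (depending only on h and r, not on g) of the values (Hasse^{(i,j)} g)(0,0) over multi-indices (i,j) with i + j ≤ r; moreover the coefficient of (Hasse^{(r,0)} g)(0,0) in this combination is 1. -/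
open MvPolynomial

variable {F : Type*} [Field F]

/-- The multivariate Hasse derivative `Hasse^ω`, defined on monomials by
`Hasse^ω x^δ = binom(δ, ω) x^{δ−ω}`. -/
noncomputable def hasseDeriv {d : ℕ} (ω : Fin d →₀ ℕ) (g : MvPolynomial (Fin d) F) :
    MvPolynomial (Fin d) F :=
  ∑ δ ∈ g.support, monomial (δ - ω) ((∏ i, (δ i).choose (ω i) : ℕ) * coeff δ g)

lemma hasse_eval_zero {d : ℕ} (ω : Fin d →₀ ℕ) (g : MvPolynomial (Fin d) F) :
    eval (fun _ => (0 : F)) (hasseDeriv ω g) = coeff ω g := by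
  classical
  rw [hasseDeriv, map_sum]
  rw [Finset.sum_eq_single ω]
  · simp [eval_monomial]
  · intro δ hδ hne
    rw [eval_monomial]
    rcases eq_or_ne (δ - ω) 0 with h' | h'
    · have hle : ∀ i, δ i ≤ ω i := by
        intro i
        have := DFunLike.congr_fun h' i
        simp [Finsupp.tsub_apply] at this
        omega
      obtain ⟨i, hi⟩ : ∃ i, δ i < ω i := by
        by_contra hc
        push_neg at hc
        exact hne (Finsupp.ext fun i => le_antisymm (hle i) (hc i))
      have hch : (δ i).choose (ω i) = 0 := Nat.choose_eq_zero_of_lt hi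
      rw [Finset.prod_eq_zero (Finset.mem_univ i) hch]
      simp
    · obtain ⟨i, hi⟩ := Finsupp.support_nonempty_iff.2 h'
      rw [Finsupp.prod, Finset.prod_eq_zero hi]
      · ring
      · have := Finsupp.mem_support_iff.mp hi
        exact zero_pow this
  · intro hω; simp [eval_monomial]; exact MvPolynomial.notMem_support_iff.mp hω

/-- Let `h ∈ F[[x]]` have no constant or linear term, and consider the curve `y = h(x)`.
For each `r` there is a fixed linear combination (depending only on `h` and `r`) of the
Hasse derivative evaluations `(Hasse^{(i,j)} g)(0,0)` with `i + j ≤ r`, with coefficient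
`1` on `Hasse^{(r,0)}`, computing the coefficient of `x^r` in `g(x, h(x))` for all `g`. -/
theorem exists_deriv_along_curve (h : PowerSeries F)
    (h0 : PowerSeries.coeff 0 h = 0) (h1 : PowerSeries.coeff 1 h = 0) (r : ℕ) :
    ∃ c : (Fin 2 →₀ ℕ) → F,
      c (Finsupp.single 0 r) = 1 ∧
      (∀ ω : Fin 2 →₀ ℕ, r < ω.sum (fun _ e => e) → c ω = 0) ∧
      ∀ g : MvPolynomial (Fin 2) F,
        PowerSeries.coeff r (aeval ![PowerSeries.X, h] g) =
          ∑ᶠ ω : Fin 2 →₀ ℕ, c ω * eval (fun _ => (0 : F)) (hasseDeriv ω g) := by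
  classical
  refine ⟨fun ω => PowerSeries.coeff r (PowerSeries.X ^ (ω 0) * h ^ (ω 1)), ?_, ?_, ?_⟩
  · simp [Finsupp.single_apply, PowerSeries.coeff_X_pow]
  · intro ω hω
    have hsum : ω.sum (fun _ e => e) = ω 0 + ω 1 := by
      rw [Finsupp.sum_fintype _ _ (fun _ => rfl)]
      exact Fin.sum_univ_two ω
    rw [hsum] at hω
    have hX : (PowerSeries.X : PowerSeries F) ∣ h := by
      rw [PowerSeries.X_dvd_iff, ← PowerSeries.coeff_zero_eq_constantCoeff_apply]
      exact h0
    have hdvd : (PowerSeries.X : PowerSeries F) ^ (ω 0 + ω 1) ∣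
        PowerSeries.X ^ (ω 0) * h ^ (ω 1) := by
      rw [pow_add]
      exact mul_dvd_mul dvd_rfl (pow_dvd_pow_of_dvd hX _)
    exact PowerSeries.X_pow_dvd_iff.mp hdvd r hω
  · intro g
    have hsupp : Function.support
        (fun ω => (PowerSeries.coeff r (PowerSeries.X ^ (ω 0) * h ^ (ω 1))) *
          eval (fun _ => (0 : F)) (hasseDeriv ω g)) ⊆ (g.support : Set (Fin 2 →₀ ℕ)) := by
      intro ω hω
      simp only [Function.mem_support, Ne] at hω
      by_contra hc
      simp only [Finset.coe_sort_coe, Finset.mem_coe, MvPolynomial.mem_support_iff,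
        not_not] at hc
      apply hω
      rw [hasse_eval_zero, hc, mul_zero]
    rw [finsum_eq_sum_of_support_subset _ hsupp]
    rw [aeval_def, eval₂_eq', map_sum]
    apply Finset.sum_congr rfl
    intro δ hδ
    rw [hasse_eval_zero]
    have : (∏ i : Fin 2, ![PowerSeries.X, h] i ^ δ i) =
        PowerSeries.X ^ (δ 0) * h ^ (δ 1) := by
      rw [Fin.prod_univ_two]; rfl
    rw [this]
    rw [show (algebraMap F (PowerSeries F)) (MvPolynomial.coeff δ g) = PowerSeries.C (MvPolynomial.coeff δ g) from rfl, PowerSeries.coeff_C_mul, mul_comm]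
end
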